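/- With the recursion and boundary conditions α̃_L = 1, β̃_L = 0, and defining T = 1/α̃_0, R = β̃_0/α̃_0 (assuming α̃_0 ≠ 0), one has |R|² + |T|² = 1. -/

import Mathlib

open Complex

private lemma step_conj (t : ℝ) (E a b : ℂ) (hE : E * (starRingEnd ℂ) E = 1) :
    (a - (Complex.I * t) * (a + b * E)) *
        (starRingEnd ℂ) (a - (Complex.I * t) * (a + b * E)) -
      (b + (Complex.I * t) * (a * (starRingEnd ℂ) E + b)) *
        (starRingEnd ℂ) (b + (Complex.I * t) * (a * (starRingEnd ℂ) E + b)) =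
    a * (starRingEnd ℂ) a - b * (starRingEnd ℂ) b := by
  simp only [map_sub, map_add, map_mul, Complex.conj_I, Complex.conj_conj, Complex.conj_ofReal]
  linear_combination ((Complex.I * (t:ℂ))^2 *
    (a * (starRingEnd ℂ) a - b * (starRingEnd ℂ) b)) * hE

private lemma step_normSq (t : ℝ) (E a b : ℂ) (hE : E * (starRingEnd ℂ) E = 1) :
    Complex.normSq (a - (Complex.I * t) * (a + b * E)) -
      Complex.normSq (b + (Complex.I * t) * (a * (starRingEnd ℂ) E + b)) =
    Complex.normSq a - Complex.normSq b := by
  have h := step_conj t E a b hE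
  rw [Complex.mul_conj, Complex.mul_conj, Complex.mul_conj, Complex.mul_conj] at h
  exact_mod_cast h

theorem energy_conservation_matched (k ω : ℝ) (hk : 0 < k) (hkπ : k < Real.pi)
    (hω : 0 < ω) (L : ℤ) (hL : 0 ≤ L) (m : ℤ → ℝ) (a b : ℤ → ℂ)
    (ha : ∀ x : ℤ, 0 < x → x ≤ L → a (x - 1) = a x -
      (Complex.I * (ω:ℂ) ^ 2 / (2 * (Real.sin k : ℂ))) * (m x : ℂ) *
        (a x + b x * Complex.exp (-2 * Complex.I * (k : ℂ) * (x : ℂ))))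
    (hb : ∀ x : ℤ, 0 < x → x ≤ L → b (x - 1) = b x +
      (Complex.I * (ω:ℂ) ^ 2 / (2 * (Real.sin k : ℂ))) * (m x : ℂ) *
        (a x * Complex.exp (2 * Complex.I * (k : ℂ) * (x : ℂ)) + b x))
    (haL : a L = 1) (hbL : b L = 0) (ha0 : a 0 ≠ 0) :
    ‖b 0 / a 0‖ ^ 2 + ‖1 / a 0‖ ^ 2 = 1 := by
  have hsin : Real.sin k ≠ 0 := ne_of_gt (Real.sin_pos_of_pos_of_lt_pi hk hkπ)
  -- invariant
  have key : ∀ n : ℕ, (n : ℤ) ≤ L →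
      Complex.normSq (a (L - n)) - Complex.normSq (b (L - n)) = 1 := by
    intro n
    induction n with
    | zero => intro _; simp [haL, hbL]
    | succ n ih =>
      intro hn
      have hn' : (n : ℤ) ≤ L := by push_cast at hn ⊢; omega
      have ihh := ih hn'
      set x : ℤ := L - n with hx
      have hx0 : 0 < x := by push_cast at hn; omega
      have hxL : x ≤ L := by omega
      have hE : Complex.exp (-2 * Complex.I * (k : ℂ) * (x : ℂ)) *
          (starRingEnd ℂ) (Complex.exp (-2 * Complex.I * (k : ℂ) * (x : ℂ))) = 1 := by
        rw [← Complex.exp_conj, ← Complex.exp_add]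
        simp only [map_mul, map_neg, map_ofNat, Complex.conj_I, Complex.conj_ofReal,
          map_intCast]
        rw [show (-2 * Complex.I * (k : ℂ) * (x : ℂ)) + (-2 * -Complex.I * (k : ℂ) * (x : ℂ)) = 0
          by ring, Complex.exp_zero]
      have hEc : Complex.exp (2 * Complex.I * (k : ℂ) * (x : ℂ)) =
          (starRingEnd ℂ) (Complex.exp (-2 * Complex.I * (k : ℂ) * (x : ℂ))) := by
        rw [← Complex.exp_conj]
        congr 1
        simp only [map_mul, map_neg, map_ofNat, Complex.conj_I, Complex.conj_ofReal,
          map_intCast]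
        ring
      set t : ℝ := ω ^ 2 / (2 * Real.sin k) * m x with htdef
      have hs : ((Real.sin k : ℝ) : ℂ) ≠ 0 := Complex.ofReal_ne_zero.mpr hsin
      have hc : (Complex.I * (ω:ℂ) ^ 2 / (2 * (Real.sin k : ℂ))) * (m x : ℂ)
          = Complex.I * (t : ℂ) := by
        rw [htdef, Complex.ofReal_mul, Complex.ofReal_div, Complex.ofReal_mul,
          Complex.ofReal_pow, Complex.ofReal_ofNat]
        field_simp
      have hax := ha x hx0 hxL
      have hbx := hb x hx0 hxL
      rw [hc] at hax hbx
      rw [hEc] at hbx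
      have hL1 : L - ((n : ℤ) + 1) = x - 1 := by omega
      push_cast [hL1]
      rw [hax, hbx, step_normSq t _ _ _ hE]
      exact ihh
  have h0 : Complex.normSq (a 0) - Complex.normSq (b 0) = 1 := by
    have := key L.toNat (by omega)
    rwa [show L - (L.toNat : ℤ) = 0 by omega] at this
  have hns : Complex.normSq (a 0) ≠ 0 := by
    simpa [Complex.normSq_eq_zero] using ha0
  rw [Complex.sq_norm, Complex.sq_norm, map_div₀, map_div₀, Complex.normSq_one]
  field_simp
  linarith
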